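/- Let u₀ = v₀ + i w₀ : [−1,1] → ℂ be C¹ with u₀(±1) = 0, w₀(x) > 0 on (−1,1), and w₀'(−1) > 0, w₀'(1) < 0. Then R* := sup_{x ∈ (−1,1)} (v₀(x)² + w₀(x)²)/(2 w₀(x)) is finite; i.e., the curve x ↦ (v₀(x), w₀(x)) is contained in a closed disk of finite radius R* tangent to the real axis at the origin, centered at i R*. -/

import Mathlib

open Set Filter Topology

/-- A C¹ curve u₀ = v₀ + i w₀ on [-1,1] vanishing at ±1, with w₀ > 0 inside and
    Hopf-type boundary conditions w₀'(-1) > 0, w₀'(1) < 0, is contained in a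
    solution disk of finite radius: sup (v₀² + w₀²)/(2 w₀) < ∞. -/
theorem curve_in_solution_disk (u₀ : ℝ → ℂ) (hC1 : ContDiff ℝ 1 u₀)
    (hm : u₀ (-1) = 0) (hp : u₀ 1 = 0)
    (hpos : ∀ x ∈ Ioo (-1 : ℝ) 1, 0 < (u₀ x).im)
    (him : 0 < (deriv u₀ (-1)).im) (him' : (deriv u₀ 1).im < 0) :
    ∃ R : ℝ, ∀ x ∈ Ioo (-1 : ℝ) 1,
      ((u₀ x).re ^ 2 + (u₀ x).im ^ 2) / (2 * (u₀ x).im) ≤ R := by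
  have hdiff : Differentiable ℝ u₀ := hC1.differentiable one_ne_zero
  set w : ℝ → ℝ := fun x => (u₀ x).im with hwdef
  set a : ℝ := (deriv u₀ (-1)).im with hadef
  set b : ℝ := (deriv u₀ 1).im with hbdef
  -- Lipschitz bound on [-1,1]
  obtain ⟨L, hL⟩ := isCompact_Icc.exists_bound_of_continuousOn
    ((hC1.continuous_deriv le_rfl).continuousOn :
      ContinuousOn (deriv u₀) (Icc (-1:ℝ) 1))
  set L₁ : ℝ := max L 1 with hL₁def
  have hL₁pos : (0:ℝ) < L₁ := lt_of_lt_of_le one_pos (le_max_right _ _)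
  have hLip : ∀ x ∈ Icc (-1:ℝ) 1, ∀ y ∈ Icc (-1:ℝ) 1,
      ‖u₀ y - u₀ x‖ ≤ L₁ * |y - x| := by
    intro x hx y hy
    have h := Convex.norm_image_sub_le_of_norm_deriv_le
      (f := u₀) (s := Icc (-1:ℝ) 1) (C := L₁)
      (fun z _ => hdiff z)
      (fun z hz => (hL z hz).trans (le_max_left _ _))
      (convex_Icc _ _) hx hy
    simpa [Real.norm_eq_abs] using h
  -- |u₀ x|² identity
  have hnormSq : ∀ x : ℝ, (u₀ x).re ^ 2 + (u₀ x).im ^ 2 = ‖u₀ x‖ ^ 2 := by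
    intro x
    rw [Complex.sq_norm, Complex.normSq_apply]; ring
  -- slope limits at the endpoints
  have hw0m : w (-1) = 0 := by simp [hwdef, hm]
  have hw0p : w 1 = 0 := by simp [hwdef, hp]
  have hdm : HasDerivAt w a (-1) :=
    Complex.imCLM.hasFDerivAt.comp_hasDerivAt _ (hdiff (-1)).hasDerivAt
  have hdp : HasDerivAt w b 1 :=
    Complex.imCLM.hasFDerivAt.comp_hasDerivAt _ (hdiff 1).hasDerivAt
  have hsm := hasDerivAt_iff_tendsto_slope.mp hdm
  have hsp := hasDerivAt_iff_tendsto_slope.mp hdp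
  -- near -1 : slope > a/2 eventually
  have hm2 : ∀ᶠ x in 𝓝[≠] (-1:ℝ), a / 2 < slope w (-1) x :=
    hsm.eventually (eventually_gt_nhds (by linarith))
  rw [eventually_nhdsWithin_iff, Metric.eventually_nhds_iff] at hm2
  obtain ⟨δ₁, hδ₁pos, hδ₁⟩ := hm2
  -- near 1 : slope < b/2 eventually
  have hp2 : ∀ᶠ x in 𝓝[≠] (1:ℝ), slope w 1 x < b / 2 :=
    hsp.eventually (eventually_lt_nhds (by linarith))
  rw [eventually_nhdsWithin_iff, Metric.eventually_nhds_iff] at hp2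
  obtain ⟨δ₂, hδ₂pos, hδ₂⟩ := hp2
  set ε : ℝ := min δ₁ δ₂ with hεdef
  have hεpos : 0 < ε := lt_min hδ₁pos hδ₂pos
  -- bound on the middle compact set
  set K : Set ℝ := Icc (-1 + ε) (1 - ε) with hKdef
  have hKsub : K ⊆ Ioo (-1:ℝ) 1 := by
    intro x hx
    exact ⟨by linarith [hx.1], by linarith [hx.2]⟩
  have hcont : ContinuousOn (fun x => ((u₀ x).re ^ 2 + (u₀ x).im ^ 2) / (2 * (u₀ x).im)) K := by
    apply ContinuousOn.div
    · exact (((Complex.continuous_re.comp hC1.continuous).pow 2).add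
        ((Complex.continuous_im.comp hC1.continuous).pow 2)).continuousOn
    · exact (continuous_const.mul (Complex.continuous_im.comp hC1.continuous)).continuousOn
    · intro x hx
      have := hpos x (hKsub hx)
      positivity
  obtain ⟨M, hM⟩ := isCompact_Icc.exists_bound_of_continuousOn hcont
  refine ⟨max M (max (2 * L₁ ^ 2 / a) (2 * L₁ ^ 2 / (-b))), fun x hx => ?_⟩
  have hxl : (-1:ℝ) < x := hx.1
  have hxr : x < 1 := hx.2
  have hxI : x ∈ Icc (-1:ℝ) 1 := ⟨le_of_lt hxl, le_of_lt hxr⟩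
  have hwx : 0 < w x := hpos x hx
  by_cases h1 : x < -1 + ε
  · -- near -1
    have hεδ : ε ≤ δ₁ := min_le_left _ _
    have hd : dist x (-1) < δ₁ := by
      rw [Real.dist_eq, abs_lt]
      constructor
      · linarith
      · linarith
    have hne : x ∈ ({(-1:ℝ)}ᶜ : Set ℝ) := by
      simp only [mem_compl_iff, mem_singleton_iff]
      intro h; rw [h] at hxl; exact absurd hxl (lt_irrefl _)
    have hslope := hδ₁ hd hne
    rw [slope_def_field, hw0m] at hslope
    have hx1 : 0 < x + 1 := by linarith
    have hwlow : a * (x + 1) / 2 < w x := by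
      have h' : a / 2 < w x / (x + 1) := by
        simpa [sub_neg_eq_add] using hslope
      rw [div_lt_div_iff₀ (by norm_num) hx1] at h'
      linarith
    have hnorm : ‖u₀ x‖ ≤ L₁ * (x + 1) := by
      have h := hLip (-1) (by constructor <;> norm_num) x hxI
      rw [hm, sub_zero] at h
      calc ‖u₀ x‖ ≤ L₁ * |x - (-1)| := h
        _ = L₁ * (x + 1) := by rw [abs_of_pos (by linarith)]; ring
    have hsq : (u₀ x).re ^ 2 + (u₀ x).im ^ 2 ≤ L₁ ^ 2 * (x + 1) ^ 2 := by
      rw [hnormSq]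
      calc ‖u₀ x‖ ^ 2 ≤ (L₁ * (x + 1)) ^ 2 := pow_le_pow_left₀ (norm_nonneg _) hnorm 2
        _ = L₁ ^ 2 * (x + 1) ^ 2 := by ring
    have hx2 : x + 1 ≤ 2 := by linarith
    have hkey : ((u₀ x).re ^ 2 + (u₀ x).im ^ 2) / (2 * w x) ≤ 2 * L₁ ^ 2 / a := by
      rw [div_le_div_iff₀ (by positivity) him]
      nlinarith [mul_le_mul_of_nonneg_right hsq him.le,
        mul_le_mul_of_nonneg_left hwlow.le (by positivity : (0:ℝ) ≤ 4 * L₁ ^ 2),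
        mul_le_mul_of_nonneg_right hx2 (by positivity : (0:ℝ) ≤ L₁ ^ 2 * (x + 1) * a)]
    calc ((u₀ x).re ^ 2 + (u₀ x).im ^ 2) / (2 * (u₀ x).im) ≤ 2 * L₁ ^ 2 / a := hkey
      _ ≤ _ := le_max_of_le_right (le_max_left _ _)
  · by_cases h2 : 1 - ε < x
    · -- near 1
      have hεδ : ε ≤ δ₂ := min_le_right _ _
      have hd : dist x 1 < δ₂ := by
        rw [Real.dist_eq, abs_lt]
        constructor
        · linarith
        · linarith
      have hne : x ∈ ({(1:ℝ)}ᶜ : Set ℝ) := by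
        simp only [mem_compl_iff, mem_singleton_iff]
        intro h; rw [h] at hxr; exact absurd hxr (lt_irrefl _)
      have hslope := hδ₂ hd hne
      rw [slope_def_field, hw0p] at hslope
      have hx1 : 0 < 1 - x := by linarith
      have hx1' : x - 1 < 0 := by linarith
      have hwlow : (-b) * (1 - x) / 2 < w x := by
        have h' : w x / (x - 1) < b / 2 := by simpa using hslope
        have h'' : b / 2 * (x - 1) < w x := (div_lt_iff_of_neg hx1').mp h'
        have heq : (-b) * (1 - x) / 2 = b / 2 * (x - 1) := by ring
        rw [heq]; exact h''
      have hnorm : ‖u₀ x‖ ≤ L₁ * (1 - x) := by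
        have h := hLip 1 (by constructor <;> norm_num) x hxI
        rw [hp, sub_zero] at h
        calc ‖u₀ x‖ ≤ L₁ * |x - 1| := h
          _ = L₁ * (1 - x) := by rw [abs_of_neg (by linarith)]; ring
      have hsq : (u₀ x).re ^ 2 + (u₀ x).im ^ 2 ≤ L₁ ^ 2 * (1 - x) ^ 2 := by
        rw [hnormSq]
        calc ‖u₀ x‖ ^ 2 ≤ (L₁ * (1 - x)) ^ 2 := pow_le_pow_left₀ (norm_nonneg _) hnorm 2
          _ = L₁ ^ 2 * (1 - x) ^ 2 := by ring
      have hbpos : 0 < -b := by linarith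
      have hx2 : 1 - x ≤ 2 := by linarith
      have hkey : ((u₀ x).re ^ 2 + (u₀ x).im ^ 2) / (2 * w x) ≤ 2 * L₁ ^ 2 / (-b) := by
        rw [div_le_div_iff₀ (by positivity) hbpos]
        nlinarith [mul_le_mul_of_nonneg_right hsq hbpos.le,
          mul_le_mul_of_nonneg_left hwlow.le (by positivity : (0:ℝ) ≤ 4 * L₁ ^ 2),
          mul_le_mul_of_nonneg_right hx2 (by positivity : (0:ℝ) ≤ L₁ ^ 2 * (1 - x) * (-b))]
      calc ((u₀ x).re ^ 2 + (u₀ x).im ^ 2) / (2 * (u₀ x).im) ≤ 2 * L₁ ^ 2 / (-b) := hkey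
        _ ≤ _ := le_max_of_le_right (le_max_right _ _)
    · -- middle
      have hxK : x ∈ K := ⟨by linarith, by linarith⟩
      have h := hM x hxK
      rw [Real.norm_eq_abs] at h
      exact le_trans (le_abs_self _) (h.trans (le_max_left _ _))
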